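/- Let Σ be a linearly ordered alphabet and let D = {d₀ < d₁ < ⋯ < d_{m-1}} be a finite prefix-free set of nonempty strings indexed in lexicographic order. Define the map φ sending an infinite sequence of the form d_{i₁}·d_{i₂}·⋯ (infinite concatenation of elements of D) to the infinite sequence of indices (i₁, i₂, …) ∈ ℕ → Fin m. Then φ is well-defined (the index sequence is unique) and strictly order-preserving: concatenation x is lexicographically less than concatenation y iff φ(x) is lexicographically less than φ(y). -/

import Mathlib

/-- `l` is a prefix of the infinite sequence `x`. -/
def SeqIsPrefix {σ : Type*} (l : List σ) (x : ℕ → σ) : Prop :=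
  ∀ i, (h : i < l.length) → x i = l.get ⟨i, h⟩

/-- `x` is the infinite concatenation `a 0 ++ a 1 ++ ⋯`. -/
def IsConcat {σ : Type*} (x : ℕ → σ) (a : ℕ → List σ) : Prop :=
  ∀ n, SeqIsPrefix (((List.range n).map a).flatten) x

/-- Lexicographic order on infinite sequences over an ordered type. -/
def SeqLexLt {τ : Type*} [LT τ] (x y : ℕ → τ) : Prop :=
  ∃ k, (∀ i < k, x i = y i) ∧ x k < y k

lemma seqIsPrefix_getElem {σ : Type*} {l : List σ} {x : ℕ → σ}
    (h : SeqIsPrefix l x) (i : ℕ) (hi : i < l.length) : x i = l[i] := h i hi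

lemma prefix_of_seqPrefix_of_le {σ : Type*} {l1 l2 : List σ} {x : ℕ → σ}
    (h1 : SeqIsPrefix l1 x) (h2 : SeqIsPrefix l2 x) (hle : l1.length ≤ l2.length) :
    l1 <+: l2 := by
  have : l1 = l2.take l1.length := by
    apply List.ext_getElem
    · simp [hle]
    · intro i hi1 hi2
      have hi2' : i < l2.length := lt_of_lt_of_le hi1 hle
      rw [List.getElem_take]
      rw [← seqIsPrefix_getElem h1 i hi1, ← seqIsPrefix_getElem h2 i hi2']
  rw [this]; exact List.take_prefix _ _

lemma seqPrefix_comparable {σ : Type*} {l1 l2 : List σ} {x : ℕ → σ}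
    (h1 : SeqIsPrefix l1 x) (h2 : SeqIsPrefix l2 x) : l1 <+: l2 ∨ l2 <+: l1 := by
  rcases le_total l1.length l2.length with h | h
  · exact Or.inl (prefix_of_seqPrefix_of_le h1 h2 h)
  · exact Or.inr (prefix_of_seqPrefix_of_le h2 h1 h)

lemma flatten_range_len {σ : Type*} (a : ℕ → List σ) (h : ∀ t, a t ≠ []) (n : ℕ) :
    n ≤ (((List.range n).map a).flatten).length := by
  induction n with
  | zero => simp
  | succ n ih =>
    rw [List.range_succ, List.map_append, List.flatten_append]
    have : 1 ≤ (a n).length := List.length_pos_iff.mpr (h n)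
    simp only [List.length_append, List.map_cons, List.map_nil, List.flatten_cons,
      List.flatten_nil, List.append_nil]
    omega

lemma concat_unique_seq {σ : Type*} {x x' : ℕ → σ} {a : ℕ → List σ} (h : ∀ t, a t ≠ [])
    (hx : IsConcat x a) (hx' : IsConcat x' a) : x = x' := by
  funext i
  have hlen := flatten_range_len a h (i + 1)
  have hi : i < (((List.range (i + 1)).map a).flatten).length := by omega
  rw [hx (i + 1) i hi, hx' (i + 1) i hi]

lemma lex_diff {σ : Type*} [LinearOrder σ] : ∀ {u v : List σ},
    List.Lex (· < ·) u v → ¬ u <+: v →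
    ∃ j a b, u.take j = v.take j ∧ u[j]? = some a ∧ v[j]? = some b ∧ a < b := by
  intro u v h
  induction h with
  | nil => intro hnp; exact absurd (List.nil_prefix) hnp
  | @cons a l1 l2 h ih =>
    intro hnp
    have hnp' : ¬ l1 <+: l2 := fun hp => hnp (List.cons_prefix_cons.mpr ⟨rfl, hp⟩)
    obtain ⟨j, s, t, ht, h1, h2, hlt⟩ := ih hnp'
    exact ⟨j + 1, s, t, by simp [ht], by simpa using h1, by simpa using h2, hlt⟩
  | @rel a l1 b l2 hab =>
    intro _
    exact ⟨0, a, b, rfl, by simp, by simp, hab⟩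

lemma seqLexLt_asymm {τ : Type*} [Preorder τ] {x y : ℕ → τ} (h : SeqLexLt x y) :
    ¬ SeqLexLt y x := by
  obtain ⟨k, ha, hl⟩ := h
  rintro ⟨k', ha', hl'⟩
  rcases lt_trichotomy k k' with hc | hc | hc
  · exact absurd (ha' k hc).symm (ne_of_lt hl)
  · subst hc; exact absurd hl' (lt_asymm hl)
  · exact absurd (ha k' hc) (ne_of_gt hl')

lemma seqLexLt_total {τ : Type*} [LinearOrder τ] {x y : ℕ → τ} (h : x ≠ y) :
    SeqLexLt x y ∨ SeqLexLt y x := by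
  classical
  have hex : ∃ k, x k ≠ y k := Function.ne_iff.mp h
  set k := Nat.find hex with hk
  have hne : x k ≠ y k := Nat.find_spec hex
  have hmin : ∀ i < k, x i = y i := fun i hi => by
    by_contra hc; exact absurd hi (not_lt.mpr (Nat.find_le hc))
  rcases hne.lt_or_gt with hlt | hlt
  · exact Or.inl ⟨k, hmin, hlt⟩
  · exact Or.inr ⟨k, fun i hi => (hmin i hi).symm, hlt⟩

lemma concat_lex_mono {σ : Type*} [LinearOrder σ] {m : ℕ} {d : Fin m → List σ}
    (hsorted : ∀ i j : Fin m, i < j → List.Lex (· < ·) (d i) (d j))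
    (hpf : ∀ i j : Fin m, i ≠ j → ¬ d i <+: d j)
    {x y : ℕ → σ} {p q : ℕ → Fin m}
    (hxp : IsConcat x (fun t => d (p t)))
    (hyq : IsConcat y (fun t => d (q t)))
    (h : SeqLexLt p q) : SeqLexLt x y := by
  obtain ⟨k, hagree, hlt⟩ := h
  set A := ((List.range k).map (fun t => d (p t))).flatten with hA
  have hAq : ((List.range k).map (fun t => d (q t))).flatten = A := by
    rw [hA]
    congr 1
    exact List.map_congr_left (fun t ht => by rw [hagree t (List.mem_range.mp ht)])
  set L := A.length with hL
  -- prefixes of x and y for k+1 blocks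
  have hxPre : SeqIsPrefix (A ++ d (p k)) x := by
    have := hxp (k + 1)
    rw [List.range_succ, List.map_append, List.flatten_append] at this
    simpa [← hA] using this
  have hyPre : SeqIsPrefix (A ++ d (q k)) y := by
    have := hyq (k + 1)
    rw [List.range_succ, List.map_append, List.flatten_append, hAq] at this
    simpa using this
  have hlex : List.Lex (· < ·) (d (p k)) (d (q k)) := hsorted _ _ hlt
  have hnp : ¬ d (p k) <+: d (q k) := hpf _ _ (ne_of_lt hlt)
  obtain ⟨j, a, b, htake, hga, hgb, hab⟩ := lex_diff hlex hnp
  have hja : j < (d (p k)).length := by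
    by_contra hc
    rw [List.getElem?_eq_none (le_of_not_gt hc)] at hga
    exact absurd hga (Option.some_ne_none _).symm
  have hjb : j < (d (q k)).length := by
    by_contra hc
    rw [List.getElem?_eq_none (le_of_not_gt hc)] at hgb
    exact absurd hgb (Option.some_ne_none _).symm
  refine ⟨L + j, ?_, ?_⟩
  · intro i hi
    rcases lt_or_ge i L with hiL | hiL
    · have h1 : i < (A ++ d (p k)).length := by simp; omega
      have h2 : i < (A ++ d (q k)).length := by simp; omega
      rw [seqIsPrefix_getElem hxPre i h1, seqIsPrefix_getElem hyPre i h2,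
        List.getElem_append_left hiL, List.getElem_append_left hiL]
    · obtain ⟨i', rfl⟩ := Nat.exists_eq_add_of_le hiL
      have hi' : i' < j := by omega
      have h1 : L + i' < (A ++ d (p k)).length := by simp; omega
      have h2 : L + i' < (A ++ d (q k)).length := by simp; omega
      rw [seqIsPrefix_getElem hxPre _ h1, seqIsPrefix_getElem hyPre _ h2,
        List.getElem_append_right (by omega : A.length ≤ L + i'),
        List.getElem_append_right (by omega : A.length ≤ L + i')]
      have hss : L + i' - A.length = i' := by omega
      simp only [hss]
      have e1 : (d (p k))[i']? = (d (q k))[i']? := by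
        have t1 : ((d (p k)).take j)[i']? = (d (p k))[i']? := by
          rw [List.getElem?_take]; simp [hi']
        have t2 : ((d (q k)).take j)[i']? = (d (q k))[i']? := by
          rw [List.getElem?_take]; simp [hi']
        rw [← t1, ← t2, htake]
      have hia : i' < (d (p k)).length := by omega
      have hib : i' < (d (q k)).length := by omega
      rw [List.getElem?_eq_getElem hia, List.getElem?_eq_getElem hib] at e1
      exact Option.some_injective _ e1
  · have h1 : L + j < (A ++ d (p k)).length := by simp; omega
    have h2 : L + j < (A ++ d (q k)).length := by simp; omega
    rw [seqIsPrefix_getElem hxPre _ h1, seqIsPrefix_getElem hyPre _ h2,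
      List.getElem_append_right (by omega : A.length ≤ L + j),
      List.getElem_append_right (by omega : A.length ≤ L + j)]
    have hss : L + j - A.length = j := by omega
    simp only [hss]
    rw [List.getElem?_eq_getElem hja] at hga
    rw [List.getElem?_eq_getElem hjb] at hgb
    rw [Option.some_injective _ hga, Option.some_injective _ hgb]
    exact hab

/-- for a finite prefix-free dictionary `d 0 < d 1 < ⋯ < d (m-1)`
listed in lexicographic order, the map `φ` from infinite concatenations of
dictionary elements to their index sequences is well defined (index sequences
are unique), and strictly order-preserving: the concatenations compare
lexicographically as `ℕ → Σ` exactly as the index sequences compare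
lexicographically as `ℕ → Fin m`. -/
theorem stmt_14 {σ : Type*} [LinearOrder σ] (m : ℕ) (d : Fin m → List σ)
    (hne : ∀ i, d i ≠ [])
    (hsorted : ∀ i j : Fin m, i < j → List.Lex (· < ·) (d i) (d j))
    (hpf : ∀ i j : Fin m, i ≠ j → ¬ d i <+: d j)
    (x y : ℕ → σ) (p p' q : ℕ → Fin m)
    (hxp : IsConcat x (fun t => d (p t)))
    (hxp' : IsConcat x (fun t => d (p' t)))
    (hyq : IsConcat y (fun t => d (q t))) :
    p = p' ∧ (SeqLexLt x y ↔ SeqLexLt p q) := by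
  have hd_inj : Function.Injective d := by
    intro i j hij
    by_contra hc
    rcases Ne.lt_or_gt hc with h | h
    · exact hpf i j hc (hij ▸ List.prefix_refl _)
    · exact hpf j i (Ne.symm hc) (hij ▸ List.prefix_refl _)
  -- block equality from flatten equality
  have blockeq : ∀ n, ((List.range n).map (fun t => d (p t))).flatten =
      ((List.range n).map (fun t => d (p' t))).flatten → p n = p' n := by
    intro n heq
    have h1 := hxp (n + 1)
    have h2 := hxp' (n + 1)
    rw [List.range_succ, List.map_append, List.flatten_append] at h1 h2
    rw [heq] at h1
    simp only [List.map_cons, List.map_nil, List.flatten_cons, List.flatten_nil,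
      List.append_nil] at h1 h2
    have := seqPrefix_comparable h1 h2
    rw [List.prefix_append_right_inj, List.prefix_append_right_inj] at this
    by_contra hc
    rcases this with h | h
    · exact hpf _ _ hc h
    · exact hpf _ _ (Ne.symm hc) h
  have hflat : ∀ n, ((List.range n).map (fun t => d (p t))).flatten =
      ((List.range n).map (fun t => d (p' t))).flatten := by
    intro n
    induction n with
    | zero => simp
    | succ n ih =>
      rw [List.range_succ, List.map_append, List.map_append, List.flatten_append,
        List.flatten_append, ih]
      simp [blockeq n ih]
  have hpp' : p = p' := funext fun n => blockeq n (hflat n)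
  refine ⟨hpp', ?_, ?_⟩
  · -- SeqLexLt x y → SeqLexLt p q
    intro hxy
    have hpq_ne : p ≠ q := by
      rintro rfl
      have : x = y := concat_unique_seq (fun t => hne (p t)) hxp hyq
      subst this
      exact seqLexLt_asymm hxy hxy
    rcases seqLexLt_total hpq_ne with h | h
    · exact h
    · exact absurd (concat_lex_mono hsorted hpf hyq hxp h) (seqLexLt_asymm hxy)
  · exact fun h => concat_lex_mono hsorted hpf hxp hyq h
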